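/- Let f, g be Boolean functions on variable set V, z ∉ V a fresh variable, and h := (z ∧ f) ∨ (¬z ∧ g) on V ∪ {z}. Suppose E[P_z] = E[N_z] = 1, Var(P_z) = Var(N_z) = 3, Cov(P_z, N_z) = −3, and (P_z, N_z) is independent of all weight variables for V. Then Cov(W_f^V, W_g^V) = Var(W_f^V) + Var(W_g^V) − Var(W_h^{V∪{z}})/4 + (3/4)·(E[W_f^V] − E[W_g^V])². -/

import Mathlib

open MeasureTheory ProbabilityTheory

/-- Covariance: `Cov(U,V) = E[UV] - E[U]E[V]`; `Var(U) = Cov(U,U)`. -/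
noncomputable def cov {Ω : Type*} [MeasurableSpace Ω] (μ : Measure Ω) (U V : Ω → ℝ) : ℝ :=
  (∫ ω, U ω * V ω ∂μ) - (∫ ω, U ω ∂μ) * (∫ ω, V ω ∂μ)

/-- Weighted model count over variable set `U` with model set `A`. -/
noncomputable def wmc {Ω U : Type*} [Fintype U] (P N : U → Ω → ℝ)
    (A : Finset (U → Bool)) : Ω → ℝ :=
  fun ω => ∑ a ∈ A, ∏ x, if a x then P x ω else N x ω

section Aux

variable {Ω V : Type*} [MeasurableSpace Ω] [Fintype V] [DecidableEq V]

lemma wmc_measurable (P N : V → Ω → ℝ) (hP : ∀ x, Measurable (P x))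
    (hN : ∀ x, Measurable (N x)) (A : Finset (V → Bool)) : Measurable (wmc P N A) := by
  unfold wmc
  refine Finset.measurable_sum _ fun a _ => Finset.measurable_prod _ fun x _ => ?_
  by_cases h : a x <;> simp only [h, if_true, if_false, Bool.false_eq_true]
  · exact hP x
  · exact hN x

lemma wmc_bdd (P N : V → Ω → ℝ) (hP : ∀ x, ∃ C, ∀ ω, |P x ω| ≤ C)
    (hN : ∀ x, ∃ C, ∀ ω, |N x ω| ≤ C) (A : Finset (V → Bool)) :
    ∃ C, ∀ ω, |wmc P N A ω| ≤ C := by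
  choose CP hCP using hP
  choose CN hCN using hN
  refine ⟨A.card * ∏ x, max (CP x) (CN x), fun ω => ?_⟩
  unfold wmc
  calc |∑ a ∈ A, ∏ x, if a x then P x ω else N x ω|
      ≤ ∑ a ∈ A, |∏ x, if a x then P x ω else N x ω| := Finset.abs_sum_le_sum_abs _ _
    _ ≤ ∑ _a ∈ A, ∏ x, max (CP x) (CN x) := by
        refine Finset.sum_le_sum fun a _ => ?_
        rw [Finset.abs_prod]
        refine Finset.prod_le_prod (fun x _ => abs_nonneg _) fun x _ => ?_
        by_cases h : a x <;> simp only [h, if_true, if_false, Bool.false_eq_true]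
        · exact (hCP x ω).trans (le_max_left _ _)
        · exact (hCN x ω).trans (le_max_right _ _)
    _ = A.card * ∏ x, max (CP x) (CN x) := by rw [Finset.sum_const, nsmul_eq_mul]

lemma bdd_mul {f g : Ω → ℝ} (hf : ∃ C, ∀ ω, |f ω| ≤ C) (hg : ∃ C, ∀ ω, |g ω| ≤ C) :
    ∃ C, ∀ ω, |f ω * g ω| ≤ C := by
  obtain ⟨C, hC⟩ := hf
  obtain ⟨D, hD⟩ := hg
  refine ⟨max C 0 * max D 0, fun ω => ?_⟩
  rw [abs_mul]
  exact mul_le_mul ((hC ω).trans (le_max_left _ _)) ((hD ω).trans (le_max_left _ _))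
    (abs_nonneg _) (le_max_right _ _)

lemma integrable_of_bdd {f : Ω → ℝ} {μ : Measure Ω} [IsFiniteMeasure μ]
    (hm : Measurable f) (hb : ∃ C, ∀ ω, |f ω| ≤ C) : Integrable f μ := by
  obtain ⟨C, hC⟩ := hb
  exact (integrable_const C).mono' hm.aestronglyMeasurable
    (Filter.Eventually.of_forall fun ω => by simpa using hC ω)

/-- Factorization of expectations of products of a function of the `none`-variables with a
function of the `some`-variables, from mutual independence. -/
lemma key_integral (μ : Measure Ω) [IsProbabilityMeasure μ] (P N : Option V → Ω → ℝ)
    (hPmeas : ∀ x, Measurable (P x)) (hNmeas : ∀ x, Measurable (N x))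
    (hindep : iIndepFun (fun x ω => (P x ω, N x ω)) μ)
    (φ : ℝ × ℝ → ℝ) (ψ : (V → ℝ × ℝ) → ℝ) (hφ : Measurable φ) (hψ : Measurable ψ)
    (hint : Integrable (fun ω => φ (P none ω, N none ω) *
      ψ (fun x => (P (some x) ω, N (some x) ω))) μ) :
    ∫ ω, φ (P none ω, N none ω) * ψ (fun x => (P (some x) ω, N (some x) ω)) ∂μ =
      (∫ ω, φ (P none ω, N none ω) ∂μ) *
        ∫ ω, ψ (fun x => (P (some x) ω, N (some x) ω)) ∂μ := by
  have hXmeas : ∀ x : Option V, Measurable (fun ω => (P x ω, N x ω)) :=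
    fun x => (hPmeas x).prodMk (hNmeas x)
  set S : Finset (Option V) := {none} with hS
  set T : Finset (Option V) := Finset.univ.image some with hT
  have hST : Disjoint S T := by
    simp [hS, hT, Finset.disjoint_left]
  have h1 := hindep.indepFun_finset S T hST hXmeas
  have hnS : none ∈ S := by simp [hS]
  have hsomeT : ∀ x : V, some x ∈ T := fun x => by simp [hT]
  set g1 : (S → ℝ × ℝ) → ℝ := fun v => φ (v ⟨none, hnS⟩) with hg1def
  set g2 : (T → ℝ × ℝ) → ℝ := fun v => ψ (fun x => v ⟨some x, hsomeT x⟩) with hg2def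
  have hg1 : Measurable g1 := hφ.comp (measurable_pi_apply _)
  have hg2 : Measurable g2 := hψ.comp (measurable_pi_lambda _ fun x => measurable_pi_apply _)
  have h2 := h1.comp hg1 hg2
  exact h2.integral_mul_eq_mul_integral (hφ.comp (hXmeas none)).aestronglyMeasurable
    (hψ.comp (measurable_pi_lambda _ fun x => hXmeas (some x))).aestronglyMeasurable

end Aux

/-- The fresh variable `z` is `none : Option V`; the other variables are `some x`.
`h = (z ∧ f) ∨ (¬ z ∧ g)`, whose models on `V ∪ {z}` set `z` true and restrict to a model
of `f`, or set `z` false and restrict to a model of `g`. -/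
theorem cov_from_variances_via_ite {Ω V : Type*} [MeasurableSpace Ω] [Fintype V] [DecidableEq V]
    (μ : Measure Ω) [IsProbabilityMeasure μ] (P N : Option V → Ω → ℝ)
    (hPmeas : ∀ x, Measurable (P x)) (hNmeas : ∀ x, Measurable (N x))
    (hPbdd : ∀ x, ∃ C, ∀ ω, |P x ω| ≤ C) (hNbdd : ∀ x, ∃ C, ∀ ω, |N x ω| ≤ C)
    (hPzexp : (∫ ω, P none ω ∂μ) = 1) (hNzexp : (∫ ω, N none ω ∂μ) = 1)
    (hPzvar : cov μ (P none) (P none) = 3) (hNzvar : cov μ (N none) (N none) = 3)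
    (hPNzcov : cov μ (P none) (N none) = -3)
    (hindep : iIndepFun (fun x ω => (P x ω, N x ω)) μ)
    (Af Ag : Finset (V → Bool))
    (Ah : Finset (Option V → Bool))
    (hAh : Ah = Finset.univ.filter (fun a : Option V → Bool =>
      if a none then (fun x => a (some x)) ∈ Af else (fun x => a (some x)) ∈ Ag)) :
    cov μ (wmc (fun x => P (some x)) (fun x => N (some x)) Af)
          (wmc (fun x => P (some x)) (fun x => N (some x)) Ag) =
      cov μ (wmc (fun x => P (some x)) (fun x => N (some x)) Af)
            (wmc (fun x => P (some x)) (fun x => N (some x)) Af) +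
        cov μ (wmc (fun x => P (some x)) (fun x => N (some x)) Ag)
              (wmc (fun x => P (some x)) (fun x => N (some x)) Ag) -
        cov μ (wmc P N Ah) (wmc P N Ah) / 4 +
        3 * ((∫ ω, wmc (fun x => P (some x)) (fun x => N (some x)) Af ω ∂μ) -
             (∫ ω, wmc (fun x => P (some x)) (fun x => N (some x)) Ag ω ∂μ)) ^ 2 / 4 := by
  -- abbreviations
  set Wf := wmc (fun x => P (some x)) (fun x => N (some x)) Af with hWf
  set Wg := wmc (fun x => P (some x)) (fun x => N (some x)) Ag with hWg
  -- pointwise decomposition of `wmc P N Ah`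
  have hWh : ∀ ω, wmc P N Ah ω = P none ω * Wf ω + N none ω * Wg ω := by
    intro ω
    subst hAh
    rw [hWf, hWg]
    unfold wmc
    rw [Finset.sum_filter]
    rw [Fintype.sum_equiv (Equiv.piOptionEquivProd (β := fun _ : Option V => Bool))
      _ (fun p : Bool × (V → Bool) =>
        if (if p.1 then p.2 ∈ Af else p.2 ∈ Ag) then
          (if p.1 then P none ω else N none ω) *
            ∏ x, (if p.2 x then P (some x) ω else N (some x) ω) else 0)
      (fun a => by
        by_cases h : (if a none then (fun x => a (some x)) ∈ Af
            else (fun x => a (some x)) ∈ Ag) <;>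
          simp only [Equiv.piOptionEquivProd, Equiv.coe_fn_mk, h, if_true, if_false,
            Fintype.prod_option] <;> split_ifs <;> simp_all <;> left <;> rfl)]
    rw [Fintype.sum_prod_type, Fintype.sum_bool]
    simp only [if_true, if_false, Bool.false_eq_true]
    rw [Fintype.sum_ite_mem, Fintype.sum_ite_mem, ← Finset.mul_sum, ← Finset.mul_sum]
  -- basic regularity
  have hWfm : Measurable Wf := wmc_measurable _ _ (fun x => hPmeas _) (fun x => hNmeas _) Af
  have hWgm : Measurable Wg := wmc_measurable _ _ (fun x => hPmeas _) (fun x => hNmeas _) Ag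
  have hWfb : ∃ C, ∀ ω, |Wf ω| ≤ C := wmc_bdd _ _ (fun x => hPbdd _) (fun x => hNbdd _) Af
  have hWgb : ∃ C, ∀ ω, |Wg ω| ≤ C := wmc_bdd _ _ (fun x => hPbdd _) (fun x => hNbdd _) Ag
  -- measurable versions of ψ for f and g
  set ψf : (V → ℝ × ℝ) → ℝ :=
    fun v => ∑ a ∈ Af, ∏ x, if a x then (v x).1 else (v x).2 with hψf
  set ψg : (V → ℝ × ℝ) → ℝ :=
    fun v => ∑ a ∈ Ag, ∏ x, if a x then (v x).1 else (v x).2 with hψg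
  have hψfm : Measurable ψf := by
    refine Finset.measurable_sum _ fun a _ => Finset.measurable_prod _ fun x _ => ?_
    by_cases h : a x <;> simp only [h, if_true, if_false, Bool.false_eq_true]
    · exact measurable_fst.comp (measurable_pi_apply x)
    · exact measurable_snd.comp (measurable_pi_apply x)
  have hψgm : Measurable ψg := by
    refine Finset.measurable_sum _ fun a _ => Finset.measurable_prod _ fun x _ => ?_
    by_cases h : a x <;> simp only [h, if_true, if_false, Bool.false_eq_true]
    · exact measurable_fst.comp (measurable_pi_apply x)
    · exact measurable_snd.comp (measurable_pi_apply x)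
  -- integrability facts
  have intPf : Integrable (fun ω => P none ω * Wf ω) μ :=
    integrable_of_bdd ((hPmeas none).mul hWfm) (bdd_mul (hPbdd none) hWfb)
  have intNg : Integrable (fun ω => N none ω * Wg ω) μ :=
    integrable_of_bdd ((hNmeas none).mul hWgm) (bdd_mul (hNbdd none) hWgb)
  have intS1 : Integrable (fun ω => P none ω * P none ω * (Wf ω * Wf ω)) μ :=
    integrable_of_bdd (((hPmeas none).mul (hPmeas none)).mul (hWfm.mul hWfm))
      (bdd_mul (bdd_mul (hPbdd none) (hPbdd none)) (bdd_mul hWfb hWfb))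
  have intS2 : Integrable (fun ω => P none ω * N none ω * (Wf ω * Wg ω)) μ :=
    integrable_of_bdd (((hPmeas none).mul (hNmeas none)).mul (hWfm.mul hWgm))
      (bdd_mul (bdd_mul (hPbdd none) (hNbdd none)) (bdd_mul hWfb hWgb))
  have intS3 : Integrable (fun ω => N none ω * P none ω * (Wg ω * Wf ω)) μ :=
    integrable_of_bdd (((hNmeas none).mul (hPmeas none)).mul (hWgm.mul hWfm))
      (bdd_mul (bdd_mul (hNbdd none) (hPbdd none)) (bdd_mul hWgb hWfb))
  have intS4 : Integrable (fun ω => N none ω * N none ω * (Wg ω * Wg ω)) μ :=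
    integrable_of_bdd (((hNmeas none).mul (hNmeas none)).mul (hWgm.mul hWgm))
      (bdd_mul (bdd_mul (hNbdd none) (hNbdd none)) (bdd_mul hWgb hWgb))
  -- second moments of the fresh variable
  have hPP : (∫ ω, P none ω * P none ω ∂μ) = 4 := by
    have h := hPzvar
    simp only [cov, hPzexp] at h
    linarith
  have hNN : (∫ ω, N none ω * N none ω ∂μ) = 4 := by
    have h := hNzvar
    simp only [cov, hNzexp] at h
    linarith
  have hPN : (∫ ω, P none ω * N none ω ∂μ) = -2 := by
    have h := hPNzcov
    simp only [cov, hPzexp, hNzexp] at h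
    linarith
  have hNP : (∫ ω, N none ω * P none ω ∂μ) = -2 := by
    rw [show (fun ω => N none ω * P none ω) = fun ω => P none ω * N none ω from
      funext fun ω => mul_comm _ _]
    exact hPN
  -- factorized integrals via independence
  have k1 : (∫ ω, P none ω * Wf ω ∂μ) = (∫ ω, P none ω ∂μ) * ∫ ω, Wf ω ∂μ :=
    key_integral μ P N hPmeas hNmeas hindep (fun p => p.1) ψf measurable_fst hψfm intPf
  have k2 : (∫ ω, N none ω * Wg ω ∂μ) = (∫ ω, N none ω ∂μ) * ∫ ω, Wg ω ∂μ :=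
    key_integral μ P N hPmeas hNmeas hindep (fun p => p.2) ψg measurable_snd hψgm intNg
  have k3 : (∫ ω, P none ω * P none ω * (Wf ω * Wf ω) ∂μ) =
      (∫ ω, P none ω * P none ω ∂μ) * ∫ ω, Wf ω * Wf ω ∂μ :=
    key_integral μ P N hPmeas hNmeas hindep (fun p => p.1 * p.1) (fun v => ψf v * ψf v)
      (measurable_fst.mul measurable_fst) (hψfm.mul hψfm) intS1
  have k4 : (∫ ω, P none ω * N none ω * (Wf ω * Wg ω) ∂μ) =
      (∫ ω, P none ω * N none ω ∂μ) * ∫ ω, Wf ω * Wg ω ∂μ :=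
    key_integral μ P N hPmeas hNmeas hindep (fun p => p.1 * p.2) (fun v => ψf v * ψg v)
      (measurable_fst.mul measurable_snd) (hψfm.mul hψgm) intS2
  have k5 : (∫ ω, N none ω * P none ω * (Wg ω * Wf ω) ∂μ) =
      (∫ ω, N none ω * P none ω ∂μ) * ∫ ω, Wg ω * Wf ω ∂μ :=
    key_integral μ P N hPmeas hNmeas hindep (fun p => p.2 * p.1) (fun v => ψg v * ψf v)
      (measurable_snd.mul measurable_fst) (hψgm.mul hψfm) intS3
  have k6 : (∫ ω, N none ω * N none ω * (Wg ω * Wg ω) ∂μ) =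
      (∫ ω, N none ω * N none ω ∂μ) * ∫ ω, Wg ω * Wg ω ∂μ :=
    key_integral μ P N hPmeas hNmeas hindep (fun p => p.2 * p.2) (fun v => ψg v * ψg v)
      (measurable_snd.mul measurable_snd) (hψgm.mul hψgm) intS4
  have hgfc : (∫ ω, Wg ω * Wf ω ∂μ) = ∫ ω, Wf ω * Wg ω ∂μ := by
    simp only [mul_comm]
  -- first moment of Wh
  have hWh1 : (∫ ω, wmc P N Ah ω ∂μ) = (∫ ω, Wf ω ∂μ) + ∫ ω, Wg ω ∂μ := by
    rw [integral_congr_ae (Filter.Eventually.of_forall hWh), integral_add intPf intNg,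
      k1, k2, hPzexp, hNzexp, one_mul, one_mul]
  -- second moment of Wh
  have hWh2 : (∫ ω, wmc P N Ah ω * wmc P N Ah ω ∂μ) =
      4 * (∫ ω, Wf ω * Wf ω ∂μ) - 4 * (∫ ω, Wf ω * Wg ω ∂μ) + 4 * ∫ ω, Wg ω * Wg ω ∂μ := by
    have hpt : ∀ ω, wmc P N Ah ω * wmc P N Ah ω =
        P none ω * P none ω * (Wf ω * Wf ω) + P none ω * N none ω * (Wf ω * Wg ω) +
          N none ω * P none ω * (Wg ω * Wf ω) + N none ω * N none ω * (Wg ω * Wg ω) := by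
      intro ω
      rw [hWh ω]
      ring
    have intS12 : Integrable (fun ω => P none ω * P none ω * (Wf ω * Wf ω) +
        P none ω * N none ω * (Wf ω * Wg ω)) μ := intS1.add intS2
    have intS123 : Integrable (fun ω => P none ω * P none ω * (Wf ω * Wf ω) +
        P none ω * N none ω * (Wf ω * Wg ω) +
        N none ω * P none ω * (Wg ω * Wf ω)) μ := intS12.add intS3
    rw [integral_congr_ae (Filter.Eventually.of_forall hpt),
      integral_add intS123 intS4, integral_add intS12 intS3, integral_add intS1 intS2,
      k3, k4, k5, k6, hPP, hPN, hNP, hNN, hgfc]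
    ring
  -- final algebra
  simp only [cov]
  rw [hWh1, hWh2]
  ring
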